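/- Let λ ≠ 0, B ∈ ℝ, κ : I → ℝ positive and differentiable with λ∫_{s₀}^s κ < B, E(s) = e^{λ∫_{s₀}^s κ - B}, θ(s) = arctan(√(1-E²)/λ) - (1/λ)arctanh(√(1-E²)), and t(s) = (√(1 - E²/(1+λ²)) cos θ, √(1 - E²/(1+λ²)) sin θ, E/√(1+λ²)). Then |t'(s)| = κ(s), i.e., the curvature of the curve α(s) = ∫ t is κ. -/

import Mathlib

/-- Inverse hyperbolic tangent. -/
noncomputable def artanh (x : ℝ) : ℝ := Real.log ((1 + x) / (1 - x)) / 2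

/-- A point of `ℝ³` as Euclidean space. -/
noncomputable def V3 (x y z : ℝ) : EuclideanSpace ℝ (Fin 3) :=
  (WithLp.equiv 2 (Fin 3 → ℝ)).symm ![x, y, z]

lemma norm_V3 (x y z : ℝ) : ‖V3 x y z‖ = Real.sqrt (x^2+y^2+z^2) := by
  simp [V3, EuclideanSpace.norm_eq, Fin.sum_univ_three, Real.norm_eq_abs, sq_abs]

lemma hasDerivAt_artanh {x : ℝ} (h1 : -1 < x) (h2 : x < 1) :
    HasDerivAt artanh (1/(1-x^2)) x := by
  have hx1 : (0:ℝ) < 1 + x := by linarith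
  have hx2 : (0:ℝ) < 1 - x := by linarith
  have hg : HasDerivAt (fun y : ℝ => (1+y)/(1-y)) (2/(1-x)^2) x := by
    have h := ((hasDerivAt_id x).const_add 1).div ((hasDerivAt_id x).const_sub 1) (by positivity)
    refine h.congr_deriv ?_
    simp only [id]
    ring
  have hpos : (0:ℝ) < (1+x)/(1-x) := by positivity
  have hlog := (Real.hasDerivAt_log (ne_of_gt hpos)).comp x hg
  have hx3 : (1:ℝ) - x^2 ≠ 0 := by nlinarith
  have h2' : HasDerivAt artanh (((1+x)/(1-x))⁻¹ * (2/(1-x)^2) / 2) x := hlog.div_const 2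
  convert h2' using 1
  field_simp
  ring

/-- the derivative of the tangent vector
`t(s) = (√(1-E²/(1+λ²)) cos θ, √(1-E²/(1+λ²)) sin θ, E/√(1+λ²))`, with
`E = exp(λ∫κ − B)` and `θ = arctan(√(1-E²)/λ) − (1/λ)artanh(√(1-E²))`, 
has norm `κ(s)`: the curvature of the curve `α = ∫ t` is `κ`. -/
theorem whirl_tangent_curvature
    (I : Set ℝ) (s₀ : ℝ) (hs₀ : s₀ ∈ I) (hI : IsOpen I) (hconn : Convex ℝ I)
    (κ : ℝ → ℝ) (lam B : ℝ) (hlam : lam ≠ 0)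
    (hκd : ∀ s ∈ I, DifferentiableAt ℝ κ s)
    (hκ : ∀ s ∈ I, 0 < κ s)
    (hB : ∀ s ∈ I, lam * ∫ u in s₀..s, κ u < B)
    (E θ : ℝ → ℝ)
    (hE : ∀ s, E s = Real.exp (lam * (∫ u in s₀..s, κ u) - B))
    (hθ : ∀ s, θ s = Real.arctan (Real.sqrt (1 - E s ^ 2) / lam) -
        artanh (Real.sqrt (1 - E s ^ 2)) / lam)
    (T : ℝ → EuclideanSpace ℝ (Fin 3))
    (hT : ∀ s, T s = V3
      (Real.sqrt (1 - E s ^ 2 / (1 + lam ^ 2)) * Real.cos (θ s))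
      (Real.sqrt (1 - E s ^ 2 / (1 + lam ^ 2)) * Real.sin (θ s))
      (E s / Real.sqrt (1 + lam ^ 2))) :
    ∀ s ∈ I, ∃ v : EuclideanSpace ℝ (Fin 3), HasDerivAt T v s ∧ ‖v‖ = κ s := by
  intro s hs
  have hκc : ContinuousOn κ I := fun t ht => (hκd t ht).continuousAt.continuousWithinAt
  -- derivative of the integral
  have hF : HasDerivAt (fun t => ∫ u in s₀..t, κ u) (κ s) s := by
    apply intervalIntegral.integral_hasDerivAt_right
    · exact (hκc.mono (hconn.ordConnected.uIcc_subset hs₀ hs)).intervalIntegrable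
    · exact (hκc.stronglyMeasurableAtFilter hI s hs)
    · exact (hκd s hs).continuousAt
  -- basic facts about E
  have hEpos : 0 < E s := by rw [hE]; exact Real.exp_pos _
  have hE1 : E s < 1 := by
    rw [hE]
    have := hB s hs
    calc Real.exp (lam * (∫ u in s₀..s, κ u) - B) < Real.exp 0 :=
          Real.exp_lt_exp.mpr (by linarith)
      _ = 1 := Real.exp_zero
  set P : ℝ := 1 + lam ^ 2 with hPdef
  have hP : 0 < P := by positivity
  have hq1 : 0 < 1 - E s ^ 2 := by nlinarith
  have hq2 : 0 < 1 - E s ^ 2 / P := by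
    rw [sub_pos, div_lt_one hP]; nlinarith
  set u : ℝ := Real.sqrt (1 - E s ^ 2) with hudef
  have hu : 0 < u := Real.sqrt_pos.mpr hq1
  have hu2 : u ^ 2 = 1 - E s ^ 2 := Real.sq_sqrt hq1.le
  set r : ℝ := Real.sqrt (1 - E s ^ 2 / P) with hrdef
  have hr : 0 < r := Real.sqrt_pos.mpr hq2
  have hr2 : r ^ 2 = 1 - E s ^ 2 / P := Real.sq_sqrt hq2.le
  have hsP : Real.sqrt P ^ 2 = P := Real.sq_sqrt hP.le
  have hsPpos : 0 < Real.sqrt P := Real.sqrt_pos.mpr hP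
  -- derivative of E
  have hE' : HasDerivAt E (lam * κ s * E s) s := by
    have hEfun : E = fun t => Real.exp (lam * (∫ u in s₀..t, κ u) - B) := funext hE
    rw [hEfun]
    have h := ((hF.const_mul lam).sub_const B).exp
    refine h.congr_deriv ?_
    rw [← hE s, hEfun]
    ring
  -- derivative of 1 - E^2
  have hq' : HasDerivAt (fun t => 1 - E t ^ 2) (-(2 * lam * κ s * E s ^ 2)) s := by
    have h := (hE'.pow 2).const_sub 1
    refine h.congr_deriv ?_; ring
  -- derivative of u(t) = sqrt (1 - E t ^ 2)
  have hu' : HasDerivAt (fun t => Real.sqrt (1 - E t ^ 2)) (-(lam * κ s * E s ^ 2) / u) s := by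
    have h := (Real.hasDerivAt_sqrt (ne_of_gt hq1)).comp s hq'
    refine h.congr_deriv ?_
    rw [← hudef]
    field_simp
  -- derivative of θ
  have hθ' : HasDerivAt θ (κ s * u / r ^ 2) s := by
    have hθfun : θ = fun t => Real.arctan (Real.sqrt (1 - E t ^ 2) / lam) -
        artanh (Real.sqrt (1 - E t ^ 2)) / lam := funext hθ
    rw [hθfun]
    have hu1 : u < 1 := by
      nlinarith [hu2, sq_nonneg (u - 1), mul_pos hEpos hEpos]
    have ha : HasDerivAt (fun t => Real.arctan (Real.sqrt (1 - E t ^ 2) / lam))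
        (1 / (1 + (u / lam) ^ 2) * ((-(lam * κ s * E s ^ 2) / u) / lam)) s :=
      (Real.hasDerivAt_arctan (u / lam)).comp (h := fun t => Real.sqrt (1 - E t ^ 2) / lam) s (hu'.div_const lam)
    have hb : HasDerivAt (fun t => artanh (Real.sqrt (1 - E t ^ 2)) / lam)
        ((1 / (1 - u ^ 2) * (-(lam * κ s * E s ^ 2) / u)) / lam) s :=
      ((hasDerivAt_artanh (by linarith) hu1).comp (h := fun t => Real.sqrt (1 - E t ^ 2)) s hu').div_const lam
    have h := ha.sub hb
    refine h.congr_deriv ?_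
    rw [hu2, hr2]
    have hQ : 1 + (u / lam) ^ 2 = (lam ^ 2 + u ^ 2) / lam ^ 2 := by
      field_simp
    rw [hQ, hu2]
    have hE2 : E s ^ 2 ≠ 0 := by positivity
    have hPE : P - E s ^ 2 ≠ 0 := by nlinarith
    field_simp
    linear_combination (-2 * E s ^ 2 * κ s * lam ^ 2
      - E s ^ 2 * κ s * lam ^ 4
      - E s ^ 2 * κ s + E s ^ 4 * κ s * lam ^ 2 + E s ^ 4 * κ s) * hu2
  -- derivative of r(t) and z(t)
  set θd : ℝ := κ s * u / r ^ 2 with hθddef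
  set rd : ℝ := -(lam * κ s * E s ^ 2) / (P * r) with hrddef
  set zd : ℝ := lam * κ s * E s / Real.sqrt P with hzddef
  have hr' : HasDerivAt (fun t => Real.sqrt (1 - E t ^ 2 / P)) rd s := by
    have hinner : HasDerivAt (fun t => 1 - E t ^ 2 / P) (-(2 * lam * κ s * E s ^ 2) / P) s := by
      have h := ((hE'.pow 2).div_const P).const_sub 1
      refine h.congr_deriv ?_; ring
    have h := (Real.hasDerivAt_sqrt (ne_of_gt hq2)).comp s hinner
    refine h.congr_deriv ?_
    rw [hrddef, ← hrdef]
    field_simp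
  have hz' : HasDerivAt (fun t => E t / Real.sqrt P) zd s := hE'.div_const _
  -- derivatives of the three components
  have hc1 : HasDerivAt (fun t => Real.sqrt (1 - E t ^ 2 / P) * Real.cos (θ t))
      (rd * Real.cos (θ s) - r * θd * Real.sin (θ s)) s := by
    have h := hr'.mul hθ'.cos
    refine h.congr_deriv ?_
    rw [← hrdef]; ring
  have hc2 : HasDerivAt (fun t => Real.sqrt (1 - E t ^ 2 / P) * Real.sin (θ t))
      (rd * Real.sin (θ s) + r * θd * Real.cos (θ s)) s := by
    have h := hr'.mul hθ'.sin
    refine h.congr_deriv ?_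
    rw [← hrdef]; ring
  -- assemble the vector derivative
  refine ⟨V3 (rd * Real.cos (θ s) - r * θd * Real.sin (θ s))
      (rd * Real.sin (θ s) + r * θd * Real.cos (θ s)) zd, ?_, ?_⟩
  · have hTfun : T = fun t => V3
        (Real.sqrt (1 - E t ^ 2 / P) * Real.cos (θ t))
        (Real.sqrt (1 - E t ^ 2 / P) * Real.sin (θ t))
        (E t / Real.sqrt P) := funext hT
    rw [hTfun]
    have hG : HasDerivAt (fun t => (![Real.sqrt (1 - E t ^ 2 / P) * Real.cos (θ t),
        Real.sqrt (1 - E t ^ 2 / P) * Real.sin (θ t), E t / Real.sqrt P] : Fin 3 → ℝ))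
        ![rd * Real.cos (θ s) - r * θd * Real.sin (θ s),
          rd * Real.sin (θ s) + r * θd * Real.cos (θ s), zd] s := by
      rw [hasDerivAt_pi]
      intro i
      fin_cases i
      · simpa using hc1
      · simpa using hc2
      · simpa using hz'
    have hL := ((EuclideanSpace.equiv (Fin 3) ℝ).symm :
        (Fin 3 → ℝ) ≃L[ℝ] EuclideanSpace ℝ (Fin 3)).toContinuousLinearMap.hasFDerivAt.comp_hasDerivAt s hG
    exact hL
  · rw [norm_V3]
    have hsin := Real.sin_sq_add_cos_sq (θ s)
    have key : (rd * Real.cos (θ s) - r * θd * Real.sin (θ s)) ^ 2 +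
        (rd * Real.sin (θ s) + r * θd * Real.cos (θ s)) ^ 2 + zd ^ 2
        = rd ^ 2 + (r * θd) ^ 2 + zd ^ 2 := by
      linear_combination (rd ^ 2 + (r * θd) ^ 2) * hsin
    rw [key]
    have key2 : rd ^ 2 + (r * θd) ^ 2 + zd ^ 2 = κ s ^ 2 := by
      have hPr : P * r ^ 2 = P - E s ^ 2 := by
        rw [hr2]; field_simp
      have hPE : P - E s ^ 2 ≠ 0 := by nlinarith
      have h1 : rd ^ 2 = lam ^ 2 * κ s ^ 2 * E s ^ 4 / (P * (P - E s ^ 2)) := by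
        rw [hrddef, div_pow]
        have hPr2 : (P * r) ^ 2 = P * (P - E s ^ 2) := by
          rw [mul_pow]; linear_combination P * hPr
        rw [hPr2]; ring
      have h2 : (r * θd) ^ 2 = κ s ^ 2 * (1 - E s ^ 2) * P / (P - E s ^ 2) := by
        rw [hθddef]
        rw [eq_div_iff hPE, ← hPr]
        field_simp
        linear_combination (κ s ^ 2) * hu2
      have h3 : zd ^ 2 = lam ^ 2 * κ s ^ 2 * E s ^ 2 / P := by
        rw [hzddef, div_pow, hsP]; ring
      rw [h1, h2, h3]
      field_simp
      linear_combination (-(κ s ^ 2 * E s ^ 2 * P ^ 2 * (P - E s ^ 2))) * hPdef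
    rw [key2, Real.sqrt_sq (hκ s hs).le]
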